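/- Let Λ_smooth ⊆ Λ ⊆ ℝ^J with μ_J(Λ \ Λ_smooth) = 0 (Lebesgue measure in ℝ^J). Define Λ_ext = {(λ¹, λ²) ∈ Λ × Λ : μ₁(L(λ¹, λ²) ∩ (Λ \ Λ_smooth)) > 0}, where L(λ¹, λ²) is the line segment joining λ¹ and λ² and μ₁ is one-dimensional Hausdorff (Lebesgue) measure along the segment. Then μ_{2J}(Λ_ext) = 0. -/

import Mathlib

open MeasureTheory

/-- If `Λ_smooth ⊆ Λ ⊆ ℝ^J` and the exceptional set `Λ \ Λ_smooth` has `J`-dimensional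
Lebesgue measure zero, then the set `Λ_ext` of pairs `(λ¹, λ²) ∈ Λ × Λ` whose
connecting segment `L(λ¹, λ²) = {αλ¹ + (1−α)λ² : α ∈ [0,1]}` meets `Λ \ Λ_smooth` in
a set of positive one-dimensional measure is a null set in `ℝ^{2J}`. -/
theorem segment_exceptional_pairs_null (J : ℕ)
    (Λ Λsmooth : Set (Fin J → ℝ)) (hsub : Λsmooth ⊆ Λ)
    (hnull : volume (Λ \ Λsmooth) = 0) :
    volume {q : (Fin J → ℝ) × (Fin J → ℝ) |
        q.1 ∈ Λ ∧ q.2 ∈ Λ ∧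
        0 < volume {α : ℝ | α ∈ Set.Icc (0 : ℝ) 1 ∧
          (α • q.1 + (1 - α) • q.2) ∈ Λ \ Λsmooth}} = 0 := by
  set N' : Set (Fin J → ℝ) := toMeasurable volume (Λ \ Λsmooth) with hN'
  have hN'meas : MeasurableSet N' := measurableSet_toMeasurable _ _
  have hN'null : volume N' = 0 := by rw [hN', measure_toMeasurable]; exact hnull
  have hNsub : Λ \ Λsmooth ⊆ N' := subset_toMeasurable _ _
  -- key slice lemma: for c ≠ 0, {y | c • y + b ∈ N'} is null
  have key : ∀ (c : ℝ), c ≠ 0 → ∀ b : Fin J → ℝ,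
      volume {y : Fin J → ℝ | c • y + b ∈ N'} = 0 := by
    intro c hc b
    have heq : {y : Fin J → ℝ | c • y + b ∈ N'} = (c • ·) ⁻¹' ((· + b) ⁻¹' N') := rfl
    rw [heq, Measure.addHaar_preimage_smul volume hc,
      measure_preimage_add_right volume b N', hN'null, mul_zero]
  set f : ℝ × ((Fin J → ℝ) × (Fin J → ℝ)) → (Fin J → ℝ) :=
    fun p => p.1 • p.2.1 + (1 - p.1) • p.2.2 with hf
  have hfcont : Continuous f := by fun_prop
  set S' : Set (ℝ × ((Fin J → ℝ) × (Fin J → ℝ))) :=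
    {p | p.1 ∈ Set.Icc (0:ℝ) 1 ∧ f p ∈ N'} with hS'
  have hS'meas : MeasurableSet S' :=
    (measurable_fst measurableSet_Icc).inter (hfcont.measurable hN'meas)
  have hS'null :
      ((volume : Measure ℝ).prod (volume : Measure ((Fin J → ℝ) × (Fin J → ℝ)))) S' = 0 := by
    rw [Measure.measure_prod_null hS'meas]
    have h1 : ∀ᵐ (α : ℝ), α ≠ (1:ℝ) := by
      refine ae_iff.mpr ?_
      simpa using measure_singleton (1 : ℝ)
    filter_upwards [h1] with α hα
    have hc : (1 - α) ≠ 0 := sub_ne_zero_of_ne (Ne.symm hα)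
    have hmeas : MeasurableSet {q : (Fin J → ℝ) × (Fin J → ℝ) |
        α • q.1 + (1 - α) • q.2 ∈ N'} := by
      refine (Continuous.measurable ?_) hN'meas
      fun_prop
    have hbig : volume {q : (Fin J → ℝ) × (Fin J → ℝ) | α • q.1 + (1 - α) • q.2 ∈ N'} = 0 := by
      rw [Measure.volume_eq_prod, Measure.measure_prod_null hmeas]
      refine ae_of_all _ fun x => ?_
      have := key (1 - α) hc (α • x)
      convert this using 2
      ext y
      simp [add_comm]
      rfl
    refine measure_mono_null ?_ hbig
    intro q hq; exact hq.2
  -- transport to ((Fin J → ℝ) × (Fin J → ℝ)) × ℝ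
  set S : Set (((Fin J → ℝ) × (Fin J → ℝ)) × ℝ) := Prod.swap ⁻¹' S' with hS
  have hSmeas : MeasurableSet S := hS'meas.preimage measurable_swap
  have hSnull : ((volume : Measure ((Fin J → ℝ) × (Fin J → ℝ))).prod (volume : Measure ℝ)) S
      = 0 := by
    have hswap := Measure.prod_swap (μ := (volume : Measure ((Fin J → ℝ) × (Fin J → ℝ))))
      (ν := (volume : Measure ℝ))
    calc ((volume : Measure ((Fin J → ℝ) × (Fin J → ℝ))).prod (volume : Measure ℝ)) S
        = (Measure.map Prod.swap
            ((volume : Measure ((Fin J → ℝ) × (Fin J → ℝ))).prod (volume : Measure ℝ))) S' := by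
          rw [Measure.map_apply measurable_swap hS'meas]
      _ = ((volume : Measure ℝ).prod (volume : Measure ((Fin J → ℝ) × (Fin J → ℝ)))) S' := by
          rw [hswap]
      _ = 0 := hS'null
  have hae : ∀ᵐ q : (Fin J → ℝ) × (Fin J → ℝ), volume (Prod.mk q ⁻¹' S) = 0 :=
    (Measure.measure_prod_null hSmeas).mp hSnull
  have hbadnull : volume {q : (Fin J → ℝ) × (Fin J → ℝ) | volume (Prod.mk q ⁻¹' S) ≠ 0} = 0 :=
    ae_iff.mp hae
  refine measure_mono_null ?_ hbadnull
  intro q hq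
  simp only [Set.mem_setOf_eq] at hq ⊢
  have hsub2 : {α : ℝ | α ∈ Set.Icc (0:ℝ) 1 ∧ (α • q.1 + (1 - α) • q.2) ∈ Λ \ Λsmooth}
      ⊆ Prod.mk q ⁻¹' S := by
    intro α hα
    exact ⟨hα.1, hNsub hα.2⟩
  exact ne_of_gt (lt_of_lt_of_le hq.2.2 (measure_mono hsub2))
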